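/- The pretentious distance satisfies the triangle inequality: for all multiplicative functions f, g, h with values in the closed unit disc and all N ∈ ℕ, D(f, g; N) ≤ D(f, h; N) + D(h, g; N), where D(f,g;N)² = Σ_{p prime, p ≤ N} (1 - Re(f(p)·conj(g(p))))/p. -/

import Mathlib

open Finset Complex

noncomputable def emb (z : ℂ) (k : Fin 3) : EuclideanSpace ℝ (Fin 5) :=
  (WithLp.equiv 2 (Fin 5 → ℝ)).symm
    ![z.re, z.im, if k = 0 then Real.sqrt (1 - ‖z‖ ^ 2) else 0,
      if k = 1 then Real.sqrt (1 - ‖z‖ ^ 2) else 0,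
      if k = 2 then Real.sqrt (1 - ‖z‖ ^ 2) else 0]

lemma emb_dist (z w : ℂ) (hz : ‖z‖ ≤ 1) (hw : ‖w‖ ≤ 1)
    (j k : Fin 3) (hjk : j ≠ k) :
    dist (emb z j) (emb w k) = Real.sqrt (2 * (1 - (z * (starRingEnd ℂ) w).re)) := by
  have hz2 : Real.sqrt (1 - Complex.normSq z) ^ 2 = 1 - (z.re ^ 2 + z.im ^ 2) := by
    rw [Real.sq_sqrt (by rw [← Complex.sq_norm]; nlinarith [norm_nonneg z]),
      Complex.normSq_apply]; ring
  have hw2 : Real.sqrt (1 - Complex.normSq w) ^ 2 = 1 - (w.re ^ 2 + w.im ^ 2) := by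
    rw [Real.sq_sqrt (by rw [← Complex.sq_norm]; nlinarith [norm_nonneg w]),
      Complex.normSq_apply]; ring
  rw [EuclideanSpace.dist_eq]
  congr 1
  rw [Fin.sum_univ_five]
  simp only [emb, WithLp.equiv_symm_apply, PiLp.toLp_apply, Matrix.cons_val_zero, Matrix.cons_val_one,
    Matrix.head_cons, Matrix.cons_val_two, Matrix.tail_cons, Matrix.cons_val_three,
    Matrix.cons_val_four, Real.dist_eq, sq_abs]
  have hzabs : ‖z‖ ^ 2 = z.re ^ 2 + z.im ^ 2 := by
    rw [Complex.sq_norm, Complex.normSq_apply]; ring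
  have hwabs : ‖w‖ ^ 2 = w.re ^ 2 + w.im ^ 2 := by
    rw [Complex.sq_norm, Complex.normSq_apply]; ring
  have hre : (z * (starRingEnd ℂ) w).re = z.re * w.re + z.im * w.im := by
    simp [Complex.mul_re]
  fin_cases j <;> fin_cases k <;> simp_all <;> ring_nf <;>
    simp only [Real.sq_sqrt (show (0:ℝ) ≤ 1 - z.re ^ 2 - z.im ^ 2 by nlinarith [norm_nonneg z]),
      Real.sq_sqrt (show (0:ℝ) ≤ 1 - w.re ^ 2 - w.im ^ 2 by nlinarith [norm_nonneg w])] <;> ring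

lemma ptw (u v w : ℂ) (hu : ‖u‖ ≤ 1) (hv : ‖v‖ ≤ 1)
    (hw : ‖w‖ ≤ 1) :
    Real.sqrt (1 - (u * (starRingEnd ℂ) v).re) ≤
      Real.sqrt (1 - (u * (starRingEnd ℂ) w).re) +
        Real.sqrt (1 - (w * (starRingEnd ℂ) v).re) := by
  have htri := dist_triangle (emb u 0) (emb w 1) (emb v 2)
  rw [emb_dist u v hu hv 0 2 (by decide), emb_dist u w hu hw 0 1 (by decide),
      emb_dist w v hw hv 1 2 (by decide)] at htri
  have h2 : ∀ t : ℝ, Real.sqrt (2 * t) = Real.sqrt 2 * Real.sqrt t := fun t =>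
    Real.sqrt_mul (by norm_num) t
  rw [h2, h2, h2] at htri
  have hs2 : (0:ℝ) < Real.sqrt 2 := Real.sqrt_pos.mpr (by norm_num)
  nlinarith [htri, hs2]

lemma mink {ι : Type*} (s : Finset ι) (a b c : ι → ℝ)
    (ha : ∀ i ∈ s, 0 ≤ a i) (hb : ∀ i ∈ s, 0 ≤ b i) (hc : ∀ i ∈ s, 0 ≤ c i)
    (hcab : ∀ i ∈ s, c i ≤ a i + b i) :
    Real.sqrt (∑ i ∈ s, c i ^ 2) ≤ Real.sqrt (∑ i ∈ s, a i ^ 2) + Real.sqrt (∑ i ∈ s, b i ^ 2) := by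
  set A := ∑ i ∈ s, a i ^ 2 with hAdef
  set B := ∑ i ∈ s, b i ^ 2 with hBdef
  have hA : 0 ≤ A := Finset.sum_nonneg fun i _ => sq_nonneg _
  have hB : 0 ≤ B := Finset.sum_nonneg fun i _ => sq_nonneg _
  have h3 : (∑ i ∈ s, a i * b i) ≤ Real.sqrt A * Real.sqrt B := by
    have h0 : 0 ≤ ∑ i ∈ s, a i * b i :=
      Finset.sum_nonneg fun i hi => mul_nonneg (ha i hi) (hb i hi)
    calc ∑ i ∈ s, a i * b i = Real.sqrt ((∑ i ∈ s, a i * b i) ^ 2) := (Real.sqrt_sq h0).symm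
      _ ≤ Real.sqrt (A * B) := Real.sqrt_le_sqrt (Finset.sum_mul_sq_le_sq_mul_sq s a b)
      _ = Real.sqrt A * Real.sqrt B := Real.sqrt_mul hA _
  have hC : ∑ i ∈ s, c i ^ 2 ≤ (Real.sqrt A + Real.sqrt B) ^ 2 := by
    have h1 : ∑ i ∈ s, c i ^ 2 ≤ ∑ i ∈ s, (a i ^ 2 + 2 * (a i * b i) + b i ^ 2) :=
      Finset.sum_le_sum fun i hi => by nlinarith [ha i hi, hb i hi, hc i hi, hcab i hi]
    have h2 : ∑ i ∈ s, (a i ^ 2 + 2 * (a i * b i) + b i ^ 2)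
        = A + 2 * (∑ i ∈ s, a i * b i) + B := by
      rw [Finset.sum_add_distrib, Finset.sum_add_distrib, ← Finset.mul_sum]
    have hsq : (Real.sqrt A + Real.sqrt B) ^ 2
        = A + 2 * (Real.sqrt A * Real.sqrt B) + B := by
      rw [add_sq, Real.sq_sqrt hA, Real.sq_sqrt hB]; ring
    rw [hsq]; linarith
  calc Real.sqrt (∑ i ∈ s, c i ^ 2) ≤ Real.sqrt ((Real.sqrt A + Real.sqrt B) ^ 2) :=
        Real.sqrt_le_sqrt hC
    _ = Real.sqrt A + Real.sqrt B :=
        Real.sqrt_sq (by positivity)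

theorem stmt2 (f g h : ℕ → ℂ)
    (hfm : ∀ m n : ℕ, Nat.Coprime m n → f (m * n) = f m * f n)
    (hgm : ∀ m n : ℕ, Nat.Coprime m n → g (m * n) = g m * g n)
    (hhm : ∀ m n : ℕ, Nat.Coprime m n → h (m * n) = h m * h n)
    (hfb : ∀ n, ‖f n‖ ≤ 1)
    (hgb : ∀ n, ‖g n‖ ≤ 1)
    (hhb : ∀ n, ‖h n‖ ≤ 1)
    (N : ℕ)
    (D : (ℕ → ℂ) → (ℕ → ℂ) → ℝ)
    (hD : ∀ u v : ℕ → ℂ, D u v =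
      Real.sqrt (∑ p ∈ (Finset.range (N + 1)).filter Nat.Prime,
        (1 - (u p * (starRingEnd ℂ) (v p)).re) / p)) :
    D f g ≤ D f h + D h g := by
  rw [hD f g, hD f h, hD h g]
  set S := (Finset.range (N + 1)).filter Nat.Prime with hS
  have hnn : ∀ (u v : ℕ → ℂ), (∀ n, ‖u n‖ ≤ 1) → (∀ n, ‖v n‖ ≤ 1) →
      ∀ p, 0 ≤ 1 - (u p * (starRingEnd ℂ) (v p)).re := by
    intro u v hu hv p
    have h1 : (u p * (starRingEnd ℂ) (v p)).re ≤ ‖u p * (starRingEnd ℂ) (v p)‖ :=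
      Complex.re_le_norm _
    rw [norm_mul, Complex.norm_conj] at h1
    nlinarith [hu p, hv p, norm_nonneg (u p), norm_nonneg (v p)]
  have hrw : ∀ (u v : ℕ → ℂ), (∀ n, ‖u n‖ ≤ 1) → (∀ n, ‖v n‖ ≤ 1) →
      ∑ p ∈ S, (1 - (u p * (starRingEnd ℂ) (v p)).re) / p
        = ∑ p ∈ S, (Real.sqrt ((1 - (u p * (starRingEnd ℂ) (v p)).re) / p)) ^ 2 := by
    intro u v hu hv
    refine Finset.sum_congr rfl fun p hp => ?_
    rw [Real.sq_sqrt (div_nonneg (hnn u v hu hv p) (Nat.cast_nonneg p))]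
  rw [hrw f g hfb hgb, hrw f h hfb hhb, hrw h g hhb hgb]
  refine mink S _ _ _ (fun p _ => Real.sqrt_nonneg _) (fun p _ => Real.sqrt_nonneg _)
    (fun p _ => Real.sqrt_nonneg _) fun p hp => ?_
  have hppos : (0:ℝ) < p := by
    have := (Finset.mem_filter.mp hp).2.pos
    exact_mod_cast this
  rw [Real.sqrt_div (hnn f g hfb hgb p), Real.sqrt_div (hnn f h hfb hhb p),
    Real.sqrt_div (hnn h g hhb hgb p), ← add_div]
  gcongr
  exact ptw (f p) (g p) (h p) (hfb p) (hgb p) (hhb p)
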